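/- arXiv:2401.04199 — 2 statements merged into one kernel-verified Lean document; each statement's English description precedes it below -/
import Mathlib

section
/- Let F ∈ ℤ[x], ℓ a prime, and write F(x) = ℓ^t G(x) + c₀ where c₀ is the constant term of F, t is the largest nonnegative integer with ℓ^t dividing all non-constant coefficients of F, and G ∈ ℤ[x] has content not divisible by ℓ. Then for every integer k > t, |∑_{v mod ℓ^k, gcd(v,ℓ)=1} exp(2πi F(v)/ℓ^k)| = ℓ^t · |∑_{v mod ℓ^{k−t}, gcd(v,ℓ)=1} exp(2πi G(v)/ℓ^{k−t})|. -/
open Finset Polynomial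

private lemma exp_congr_aux (n : ℕ) (hn : n ≠ 0) (a b : ℤ) (h : (n : ℤ) ∣ (a - b)) :
    Complex.exp (2 * Real.pi * Complex.I * (a : ℂ) / (n : ℂ)) =
      Complex.exp (2 * Real.pi * Complex.I * (b : ℂ) / (n : ℂ)) := by
  obtain ⟨q, hq⟩ := h
  have ha : (a : ℂ) = (b : ℂ) + (n : ℂ) * (q : ℂ) := by
    have : a = b + (n : ℤ) * q := by linarith
    exact_mod_cast congrArg (fun z : ℤ => (z : ℂ)) this
  have hnC : (n : ℂ) ≠ 0 := Nat.cast_ne_zero.mpr hn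
  have : 2 * Real.pi * Complex.I * (a : ℂ) / (n : ℂ) =
      2 * Real.pi * Complex.I * (b : ℂ) / (n : ℂ) + (q : ℂ) * (2 * Real.pi * Complex.I) := by
    rw [ha]; field_simp
  rw [this, Complex.exp_add, Complex.exp_int_mul_two_pi_mul_I, mul_one]

/-- If `F = ℓ^t · G + c₀` with `ℓ` not dividing the content of `G`, then for `k > t`
the exponential sum for `F` mod `ℓ^k` has modulus `ℓ^t` times that for `G` mod `ℓ^(k-t)`. -/
theorem stmt6 (F G : Polynomial ℤ) (hF : 0 < F.natDegree) (ℓ : ℕ) (hℓ : ℓ.Prime)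
    (t : ℕ) (hFG : F = C ((ℓ : ℤ) ^ t) * G + C (F.coeff 0))
    (hcont : ¬ (ℓ : ℤ) ∣ G.content) (k : ℕ) (hk : t < k) :
    ‖∑ v ∈ (Finset.range (ℓ ^ k)).filter (fun v => ¬ ℓ ∣ v),
        Complex.exp (2 * Real.pi * Complex.I * ((F.eval (v : ℤ) : ℤ) : ℂ) / ((ℓ : ℂ) ^ k))‖ =
      (ℓ : ℝ) ^ t *
        ‖∑ v ∈ (Finset.range (ℓ ^ (k - t))).filter (fun v => ¬ ℓ ∣ v),
          Complex.exp (2 * Real.pi * Complex.I * ((G.eval (v : ℤ) : ℤ) : ℂ) / ((ℓ : ℂ) ^ (k - t)))‖ := by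
  set m := k - t with hmdef
  have hm1 : 1 ≤ m := by omega
  have hkm : k = t + m := by omega
  have hℓpos : 0 < ℓ := hℓ.pos
  have hℓC : (ℓ : ℂ) ≠ 0 := Nat.cast_ne_zero.mpr hℓpos.ne'
  have hNm : 0 < ℓ ^ m := pow_pos hℓpos m
  have hNmZ : ((ℓ ^ m : ℕ) : ℤ) ≠ 0 := by exact_mod_cast hNm.ne'
  set g : ℕ → ℂ := fun v =>
    Complex.exp (2 * Real.pi * Complex.I * ((G.eval (v : ℤ) : ℤ) : ℂ) / ((ℓ : ℂ) ^ m)) with hg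
  have key : ∀ v : ℕ,
      Complex.exp (2 * Real.pi * Complex.I * ((F.eval (v : ℤ) : ℤ) : ℂ) / ((ℓ : ℂ) ^ k)) =
      Complex.exp (2 * Real.pi * Complex.I * ((F.coeff 0 : ℤ) : ℂ) / ((ℓ : ℂ) ^ k)) * g v := by
    intro v
    have hev : F.eval (v : ℤ) = (ℓ : ℤ) ^ t * G.eval (v : ℤ) + F.coeff 0 := by
      conv_lhs => rw [hFG]
      simp
    rw [hg, ← Complex.exp_add]
    congr 1
    rw [hev]
    have hpow : (ℓ : ℂ) ^ k = (ℓ : ℂ) ^ t * (ℓ : ℂ) ^ m := by rw [hkm, pow_add]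
    push_cast
    rw [hpow]
    field_simp
    ring
  have h1 : ∑ v ∈ (Finset.range (ℓ ^ k)).filter (fun v => ¬ ℓ ∣ v),
      Complex.exp (2 * Real.pi * Complex.I * ((F.eval (v : ℤ) : ℤ) : ℂ) / ((ℓ : ℂ) ^ k)) =
      Complex.exp (2 * Real.pi * Complex.I * ((F.coeff 0 : ℤ) : ℂ) / ((ℓ : ℂ) ^ k)) *
      ∑ v ∈ (Finset.range (ℓ ^ k)).filter (fun v => ¬ ℓ ∣ v), g v := by
    rw [Finset.mul_sum]
    exact Finset.sum_congr rfl fun v _ => key v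
  have hℓdvd : ℓ ∣ ℓ ^ m := dvd_pow_self ℓ (by omega)
  -- the big sum equals ℓ^t copies of the small sum
  have h2 : ∑ v ∈ (Finset.range (ℓ ^ k)).filter (fun v => ¬ ℓ ∣ v), g v =
      (ℓ ^ t) • ∑ j ∈ (Finset.range (ℓ ^ m)).filter (fun v => ¬ ℓ ∣ v), g j := by
    have hbij : ∑ v ∈ (Finset.range (ℓ ^ k)).filter (fun v => ¬ ℓ ∣ v), g v =
        ∑ p ∈ (Finset.range (ℓ ^ t)) ×ˢ ((Finset.range (ℓ ^ m)).filter (fun v => ¬ ℓ ∣ v)),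
          g (p.1 * ℓ ^ m + p.2) := by
      refine Finset.sum_nbij' (fun v => (v / ℓ ^ m, v % ℓ ^ m))
        (fun p => p.1 * ℓ ^ m + p.2) ?_ ?_ ?_ ?_ ?_
      · intro v hv
        simp only [Finset.mem_filter, Finset.mem_range] at hv
        simp only [Finset.mem_product, Finset.mem_filter, Finset.mem_range]
        refine ⟨?_, Nat.mod_lt _ hNm, ?_⟩
        · rw [Nat.div_lt_iff_lt_mul hNm, ← pow_add, ← hkm]
          exact hv.1
        · intro hdvd
          exact hv.2 ((Nat.div_add_mod v (ℓ ^ m)) ▸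
            Nat.dvd_add (hℓdvd.trans (Dvd.intro _ rfl)) hdvd)
      · intro p hp
        simp only [Finset.mem_product, Finset.mem_filter, Finset.mem_range] at hp
        simp only [Finset.mem_filter, Finset.mem_range]
        constructor
        · calc p.1 * ℓ ^ m + p.2 < p.1 * ℓ ^ m + ℓ ^ m := by omega
            _ = (p.1 + 1) * ℓ ^ m := by ring
            _ ≤ ℓ ^ t * ℓ ^ m := Nat.mul_le_mul_right _ hp.1
            _ = ℓ ^ k := by rw [← pow_add, ← hkm]
        · intro hdvd
          exact hp.2.2 ((Nat.dvd_add_right ((hℓdvd.mul_left p.1))).mp hdvd)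
      · intro v hv
        exact Nat.div_add_mod' v (ℓ ^ m)
      · intro p hp
        simp only [Finset.mem_product, Finset.mem_filter, Finset.mem_range] at hp
        have hdiv : (p.1 * ℓ ^ m + p.2) / ℓ ^ m = p.1 := by
          rw [mul_comm, Nat.mul_add_div hNm, Nat.div_eq_of_lt hp.2.1, add_zero]
        have hmod : (p.1 * ℓ ^ m + p.2) % ℓ ^ m = p.2 := by
          rw [mul_comm, Nat.mul_add_mod, Nat.mod_eq_of_lt hp.2.1]
        exact Prod.ext hdiv hmod
      · intro v hv
        show g v = g (v / ℓ ^ m * ℓ ^ m + v % ℓ ^ m)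
        exact (congrArg g (Nat.div_add_mod' v (ℓ ^ m))).symm
    rw [hbij]
    have hcong : ∀ p ∈ (Finset.range (ℓ ^ t)) ×ˢ
        ((Finset.range (ℓ ^ m)).filter (fun v => ¬ ℓ ∣ v)),
        g (p.1 * ℓ ^ m + p.2) = g p.2 := by
      intro p _
      rw [hg]
      have hdvd : ((ℓ ^ m : ℕ) : ℤ) ∣
          (G.eval ((p.1 * ℓ ^ m + p.2 : ℕ) : ℤ) - G.eval ((p.2 : ℕ) : ℤ)) := by
        have := Polynomial.sub_dvd_eval_sub ((p.1 * ℓ ^ m + p.2 : ℕ) : ℤ) ((p.2 : ℕ) : ℤ) G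
        have heq : ((p.1 * ℓ ^ m + p.2 : ℕ) : ℤ) - ((p.2 : ℕ) : ℤ) = (p.1 : ℤ) * (ℓ ^ m : ℕ) := by
          push_cast; ring
        rw [heq] at this
        exact (dvd_mul_left _ _).trans this
      have := exp_congr_aux (ℓ ^ m) hNm.ne' _ _ hdvd
      simpa [Nat.cast_pow] using this
    rw [Finset.sum_congr rfl hcong, Finset.sum_product]
    simp [Finset.sum_const, Finset.card_range]
  rw [h1, norm_mul, h2]
  have habs1 : ‖Complex.exp
      (2 * Real.pi * Complex.I * ((F.coeff 0 : ℤ) : ℂ) / ((ℓ : ℂ) ^ k))‖ = 1 := by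
    have : 2 * Real.pi * Complex.I * ((F.coeff 0 : ℤ) : ℂ) / ((ℓ : ℂ) ^ k) =
        ((2 * Real.pi * (F.coeff 0 : ℝ) / (ℓ : ℝ) ^ k : ℝ) : ℂ) * Complex.I := by
      push_cast; ring
    rw [this]
    exact Complex.norm_exp_ofReal_mul_I _
  rw [habs1, one_mul, nsmul_eq_mul, norm_mul, Complex.norm_natCast]
  push_cast
  ring
end

section
/- Let J = ⌊log log log x⌋ and y = exp((log x)^{ε/2}) for fixed ε ∈ (0,1]. The number of positive integers n ≤ x that are not convenient (i.e., either some of the J largest prime factors of n with multiplicity is at most y, or one of them is repeated) is o(x) as x → ∞. -/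
open Filter Finset

/-- The largest prime factor of `m`, with the convention `P(1) = 1`. -/
def largestPrimeFactor (m : ℕ) : ℕ := max 1 (m.primeFactors.sup id)

/-- `n` is convenient (parameters `x`, `y`, `J`): `n = m·P₁⋯P_J` with
`P₁ > ⋯ > P_J` distinct primes, each `P_j > max{P(m), y}`, and `P₁⋯P_J ≤ x/m`. -/
def Convenient (x y : ℝ) (J n : ℕ) : Prop :=
  ∃ m : ℕ, ∃ P : Fin J → ℕ, 0 < m ∧ (∀ j, (P j).Prime) ∧
    (∀ i j : Fin J, i < j → P j < P i) ∧
    (∀ j, y < (P j : ℝ) ∧ largestPrimeFactor m < P j) ∧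
    n = m * ∏ j, P j ∧ ((∏ j, P j : ℕ) : ℝ) ≤ x / (m : ℝ)

lemma incl {x y : ℝ} {J n : ℕ} (hn : 0 < n) (hnx : (n : ℝ) ≤ x)
    (h1 : ¬ ∃ p : ℕ, p.Prime ∧ y < (p : ℝ) ∧ p ^ 2 ∣ n)
    (h2 : J ≤ (n.primeFactors.filter (fun p : ℕ => y < (p : ℝ))).card) :
    Convenient x y J n := by
  classical
  set S : Finset ℕ := n.primeFactors.filter (fun p : ℕ => y < (p : ℝ)) with hS
  set L : List ℕ := S.sort (· ≤ ·) with hL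
  have hlen : L.length = S.card := Finset.length_sort _
  have hsorted : L.Pairwise (· < ·) := (Finset.sortedLT_sort S).pairwise
  have hmemL : ∀ a, a ∈ L ↔ a ∈ S := fun a => Finset.mem_sort _
  have hidx : ∀ j : Fin J, S.card - 1 - (j : ℕ) < L.length := by
    intro j; have := j.2; omega
  set P : Fin J → ℕ := fun j => L.get ⟨S.card - 1 - (j : ℕ), hidx j⟩ with hP
  have hPS : ∀ j, P j ∈ S := fun j => (hmemL _).1 (L.get_mem _)
  have hPprime : ∀ j, (P j).Prime := fun j => Nat.prime_of_mem_primeFactors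
    (Finset.mem_filter.1 (hPS j)).1
  have hPy : ∀ j, y < (P j : ℝ) := fun j => (Finset.mem_filter.1 (hPS j)).2
  have hPdvd : ∀ j, P j ∣ n := fun j => Nat.dvd_of_mem_primeFactors
    (Finset.mem_filter.1 (hPS j)).1
  have hdec : ∀ i j : Fin J, i < j → P j < P i := by
    intro i j hij
    exact hsorted.rel_get_of_lt (by simp only [Fin.mk_lt_mk]; have := j.2; omega)
  have hPinj : Function.Injective P := by
    intro i j hij
    rcases lt_trichotomy i j with h | h | h
    · exact absurd hij (hdec i j h).ne'
    · exact h
    · exact absurd hij (hdec j i h).ne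
  -- product of the P j divides n
  have hTprod : ∏ j, P j = ∏ p ∈ Finset.image P Finset.univ, p := by
    rw [Finset.prod_image (fun a _ b _ h => hPinj h)]
  have hTsub : Finset.image P Finset.univ ⊆ n.primeFactors := by
    intro p hp
    rcases Finset.mem_image.1 hp with ⟨j, _, rfl⟩
    exact (Finset.mem_filter.1 (hPS j)).1
  have hproddvd : (∏ j, P j) ∣ n := by
    rw [hTprod]
    exact dvd_trans (Finset.prod_dvd_prod_of_subset _ _ _ hTsub) (Nat.prod_primeFactors_dvd n)
  set m : ℕ := n / ∏ j, P j with hm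
  have hprodpos : 0 < ∏ j, P j := Finset.prod_pos (fun j _ => (hPprime j).pos)
  have hmn : n = m * ∏ j, P j := (Nat.div_mul_cancel hproddvd).symm
  have hmpos : 0 < m := by
    rcases Nat.eq_zero_or_pos m with h | h
    · rw [hmn, h, zero_mul] at hn; exact absurd hn (lt_irrefl 0)
    · exact h
  -- every prime factor of m is < P j for every j
  have hq : ∀ q ∈ m.primeFactors, ∀ j : Fin J, q < P j := by
    intro q hqmem j
    have hqprime : q.Prime := Nat.prime_of_mem_primeFactors hqmem
    have hqm : q ∣ m := Nat.dvd_of_mem_primeFactors hqmem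
    have hqn : q ∣ n := hqm.trans ⟨∏ j, P j, hmn⟩
    by_cases hqy : y < (q : ℝ)
    · -- q ∈ S
      have hqS : q ∈ S := Finset.mem_filter.2 ⟨Nat.mem_primeFactors.2 ⟨hqprime, hqn, hn.ne'⟩, hqy⟩
      -- q is not one of the P j' (else q^2 ∣ n)
      have hqnotP : ∀ j' : Fin J, q ≠ P j' := by
        intro j' hq'
        apply h1
        refine ⟨q, hqprime, hqy, ?_⟩
        have h1' : q ∣ ∏ j, P j := hq' ▸ Finset.dvd_prod_of_mem _ (Finset.mem_univ j')
        calc q ^ 2 = q * q := sq q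
        _ ∣ m * ∏ j, P j := mul_dvd_mul hqm h1'
        _ = n := hmn.symm
      -- q = L.get k for some k, and k < S.card - J
      have hqL : q ∈ L := (hmemL q).2 hqS
      rcases List.mem_iff_get.1 hqL with ⟨k, hk⟩
      have hkL := k.isLt
      have hkJ : (k : ℕ) < S.card - J := by
        by_contra hcon
        push_neg at hcon
        have hj'J : S.card - 1 - (k : ℕ) < J := by omega
        have : P ⟨S.card - 1 - (k : ℕ), hj'J⟩ = q := by
          rw [← hk]
          show L.get _ = L.get k
          congr 1
          exact Fin.ext (by simp only []; omega)
        exact hqnotP ⟨S.card - 1 - (k : ℕ), hj'J⟩ this.symm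
      have hkP : L.get k < P j := by
        apply hsorted.rel_get_of_lt
        rw [Fin.lt_def]
        have := j.2
        simp only []
        omega
      rw [hk] at hkP
      exact hkP
    · -- q ≤ y < P j
      push_neg at hqy
      have : (q : ℝ) < (P j : ℝ) := lt_of_le_of_lt hqy (hPy j)
      exact_mod_cast this
  refine ⟨m, P, hmpos, hPprime, hdec, ?_, hmn, ?_⟩
  · intro j
    refine ⟨hPy j, ?_⟩
    have h2lt : 1 < P j := (hPprime j).one_lt
    have hsup : m.primeFactors.sup id < P j := by
      apply Finset.sup_lt_iff (show (⊥:ℕ) < P j from (hPprime j).pos) |>.2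
      intro q hq'
      exact hq q hq' j
    exact max_lt h2lt hsup
  · rw [le_div_iff₀ (by exact_mod_cast hmpos)]
    calc ((∏ j, P j : ℕ) : ℝ) * m = (n : ℝ) := by rw [hmn]; push_cast; ring
    _ ≤ x := hnx



lemma sum_inv_sq_le (M N : ℕ) (hM : 2 ≤ M) :
    ∑ m ∈ Icc M N, ((m : ℝ) ^ 2)⁻¹ ≤ ((M : ℝ) - 1)⁻¹ := by
  have step : ∀ m ∈ Icc M N, ((m:ℝ)^2)⁻¹ ≤ ((m:ℝ) - 1)⁻¹ - (m:ℝ)⁻¹ := by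
    intro m hm
    have hm2 : 2 ≤ m := le_trans hM (Finset.mem_Icc.1 hm).1
    have h1 : (1:ℝ) ≤ (m:ℝ) - 1 := by
      have : (2:ℝ) ≤ (m:ℝ) := by exact_mod_cast hm2
      linarith
    have hmpos : (0:ℝ) < m := by positivity
    have key : ((m:ℝ) - 1)⁻¹ - (m:ℝ)⁻¹ = (((m:ℝ) - 1) * m)⁻¹ := by
      rw [mul_inv]
      field_simp
      ring
    rw [key]
    apply inv_anti₀
    · nlinarith
    · nlinarith
  calc ∑ m ∈ Icc M N, ((m : ℝ) ^ 2)⁻¹ ≤ ∑ m ∈ Icc M N, (((m:ℝ) - 1)⁻¹ - (m:ℝ)⁻¹) :=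
        Finset.sum_le_sum step
  _ ≤ ((M : ℝ) - 1)⁻¹ := by
      rw [show Icc M N = Ico M (N+1) by rw [Finset.Ico_add_one_right_eq_Icc]]
      rw [Finset.sum_Ico_eq_sum_range]
      have : ∀ i, ((M + i : ℕ) : ℝ) = (M : ℝ) + i := by intro i; push_cast; ring
      rcases le_or_gt M N with hMN | hMN
      · have : ∑ i ∈ range (N + 1 - M), ((((M + i :ℕ):ℝ) - 1)⁻¹ - ((M + i :ℕ):ℝ)⁻¹)
            = ∑ i ∈ range (N + 1 - M), ((fun i => (((M + i :ℕ):ℝ) - 1)⁻¹) i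
              - (fun i => (((M + i :ℕ):ℝ) - 1)⁻¹) (i+1)) := by
          apply Finset.sum_congr rfl
          intro i _
          congr 2
          push_cast
          ring
        rw [this, Finset.sum_range_sub']
        show (((M + 0 : ℕ) : ℝ) - 1)⁻¹ - (((M + (N + 1 - M) : ℕ) : ℝ) - 1)⁻¹ ≤ ((M : ℝ) - 1)⁻¹
        have e0 : ((M + 0 : ℕ) : ℝ) = (M : ℝ) := by norm_num
        have e1 : (M + (N + 1 - M) : ℕ) = N + 1 := by omega
        rw [e0, e1]
        have hterm : (0:ℝ) ≤ (((N + 1 : ℕ) : ℝ) - 1)⁻¹ := by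
          have h' : (((N + 1 : ℕ) : ℝ) - 1) = (N : ℝ) := by push_cast; ring
          rw [h']
          positivity
        linarith
      · have : N + 1 - M = 0 := by omega
        rw [this]
        simp only [Finset.range_zero, Finset.sum_empty]
        have h2 : (2:ℝ) ≤ (M:ℝ) := by exact_mod_cast hM
        exact inv_nonneg.2 (by linarith)

open scoped Classical in
lemma countB1 (y : ℝ) (hy : 2 ≤ y) (N : ℕ) :
    (((Icc 1 N).filter (fun n => ∃ p : ℕ, p.Prime ∧ y < (p : ℝ) ∧ p ^ 2 ∣ n)).card : ℝ)
      ≤ 2 * N / y := by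
  classical
  set P' : Finset ℕ := (Icc 2 N).filter (fun p : ℕ => p.Prime ∧ y < (p : ℝ)) with hP'
  have hsub : (Icc 1 N).filter (fun n => ∃ p : ℕ, p.Prime ∧ y < (p : ℝ) ∧ p ^ 2 ∣ n)
      ⊆ P'.biUnion (fun p => (Icc 1 N).filter (fun n => p ^ 2 ∣ n)) := by
    intro n hn
    rcases Finset.mem_filter.1 hn with ⟨hn1, p, hp, hpy, hdvd⟩
    rcases Finset.mem_Icc.1 hn1 with ⟨hn1', hn2⟩
    have hp2n : p ^ 2 ≤ n := Nat.le_of_dvd (by omega) hdvd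
    have hpp : p ≤ p ^ 2 := by nlinarith [hp.two_le]
    apply Finset.mem_biUnion.2
    refine ⟨p, ?_, Finset.mem_filter.2 ⟨hn1, hdvd⟩⟩
    exact Finset.mem_filter.2 ⟨Finset.mem_Icc.2 ⟨hp.two_le, by omega⟩, hp, hpy⟩
  have hcard : ((Icc 1 N).filter (fun n => ∃ p : ℕ, p.Prime ∧ y < (p : ℝ) ∧ p ^ 2 ∣ n)).card
      ≤ ∑ p ∈ P', N / p ^ 2 := by
    refine le_trans (Finset.card_le_card hsub) ?_
    refine le_trans (Finset.card_biUnion_le) ?_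
    apply Finset.sum_le_sum
    intro p _
    have e : (Icc 1 N) = Ioc 0 N := Finset.Icc_add_one_left_eq_Ioc 0 N
    rw [e, Nat.Ioc_filter_dvd_card_eq_div]
  have hM2 : 2 ≤ ⌈y⌉₊ := by
    have : (1 : ℕ) < ⌈y⌉₊ := Nat.lt_ceil.2 (by exact_mod_cast (by linarith : (1:ℝ) < y))
    omega
  have hPsub : P' ⊆ Icc ⌈y⌉₊ N := by
    intro p hp
    rcases Finset.mem_filter.1 hp with ⟨hp1, hp2, hp3⟩
    rcases Finset.mem_Icc.1 hp1 with ⟨_, hpN⟩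
    exact Finset.mem_Icc.2 ⟨Nat.ceil_le.2 (le_of_lt hp3), hpN⟩
  calc (((Icc 1 N).filter (fun n => ∃ p : ℕ, p.Prime ∧ y < (p : ℝ) ∧ p ^ 2 ∣ n)).card : ℝ)
      ≤ ∑ p ∈ P', ((N / p ^ 2 : ℕ) : ℝ) := by exact_mod_cast hcard
    _ ≤ ∑ p ∈ P', (N : ℝ) / (p : ℝ) ^ 2 := by
        apply Finset.sum_le_sum
        intro p _
        calc ((N / p ^ 2 : ℕ) : ℝ) ≤ (N : ℝ) / ((p ^ 2 : ℕ) : ℝ) := Nat.cast_div_le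
        _ = (N : ℝ) / (p : ℝ) ^ 2 := by push_cast; ring
    _ = (N : ℝ) * ∑ p ∈ P', ((p : ℝ) ^ 2)⁻¹ := by
        rw [Finset.mul_sum]
        apply Finset.sum_congr rfl
        intro p _
        rw [div_eq_mul_inv]
    _ ≤ (N : ℝ) * ∑ m ∈ Icc ⌈y⌉₊ N, ((m : ℝ) ^ 2)⁻¹ := by
        apply mul_le_mul_of_nonneg_left _ (Nat.cast_nonneg N)
        apply Finset.sum_le_sum_of_subset_of_nonneg hPsub
        intro m _ _
        positivity
    _ ≤ (N : ℝ) * ((⌈y⌉₊ : ℝ) - 1)⁻¹ := by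
        exact mul_le_mul_of_nonneg_left (sum_inv_sq_le _ _ hM2) (Nat.cast_nonneg N)
    _ ≤ 2 * N / y := by
        have h1 : y ≤ (⌈y⌉₊ : ℝ) := Nat.le_ceil y
        have h2 : y / 2 ≤ (⌈y⌉₊ : ℝ) - 1 := by linarith
        have h3 : (0 : ℝ) < y / 2 := by linarith
        have h4 : ((⌈y⌉₊ : ℝ) - 1)⁻¹ ≤ (y / 2)⁻¹ := inv_anti₀ h3 h2
        calc (N : ℝ) * ((⌈y⌉₊ : ℝ) - 1)⁻¹ ≤ (N : ℝ) * (y / 2)⁻¹ :=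
              mul_le_mul_of_nonneg_left h4 (Nat.cast_nonneg N)
        _ = 2 * N / y := by field_simp



open scoped Classical in
lemma countB2 (y : ℝ) (N J : ℕ)
    (hJ : (J : ℝ) < ∑ p ∈ (Icc 1 N).filter (fun p : ℕ => p.Prime ∧ y < (p : ℝ)), (p : ℝ)⁻¹) :
    (((Icc 1 N).filter
        (fun n => ((n.primeFactors.filter (fun p : ℕ => y < (p : ℝ))).card) < J)).card : ℝ)
      * ((∑ p ∈ (Icc 1 N).filter (fun p : ℕ => p.Prime ∧ y < (p : ℝ)), (p : ℝ)⁻¹) - J) ^ 2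
      ≤ 3 * N * (∑ p ∈ (Icc 1 N).filter (fun p : ℕ => p.Prime ∧ y < (p : ℝ)), (p : ℝ)⁻¹) := by
  classical
  set I : Finset ℕ := (Icc 1 N).filter (fun p : ℕ => p.Prime ∧ y < (p : ℝ)) with hI
  set μ : ℝ := ∑ p ∈ I, (p : ℝ)⁻¹ with hμ
  have hμ0 : 0 ≤ μ := Finset.sum_nonneg (fun p _ => by positivity)
  set R : Finset ℕ := Icc 1 N with hR
  have hcardR : R.card = N := by rw [hR, Nat.card_Icc]; omega
  set w : ℕ → ℝ := fun n => ∑ p ∈ I, (if p ∣ n then (1 : ℝ) else 0) with hw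
  -- w n equals the prime-factor count for n in range
  have hwcard : ∀ n ∈ R, w n = ((n.primeFactors.filter (fun p : ℕ => y < (p : ℝ))).card : ℝ) := by
    intro n hn
    rcases Finset.mem_Icc.1 hn with ⟨hn1, hn2⟩
    have : I.filter (fun p => p ∣ n) = n.primeFactors.filter (fun p : ℕ => y < (p : ℝ)) := by
      ext q
      constructor
      · intro hq
        rcases Finset.mem_filter.1 hq with ⟨hqI, hqd⟩
        rcases Finset.mem_filter.1 hqI with ⟨_, hqp, hqy⟩
        exact Finset.mem_filter.2 ⟨Nat.mem_primeFactors.2 ⟨hqp, hqd, by omega⟩, hqy⟩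
      · intro hq
        rcases Finset.mem_filter.1 hq with ⟨hqpf, hqy⟩
        rcases Nat.mem_primeFactors.1 hqpf with ⟨hqp, hqd, _⟩
        have hqn : q ≤ n := Nat.le_of_dvd (by omega) hqd
        refine Finset.mem_filter.2 ⟨Finset.mem_filter.2 ⟨Finset.mem_Icc.2 ⟨hqp.one_lt.le, by omega⟩, hqp, hqy⟩, hqd⟩
    rw [hw]
    simp only [Finset.sum_boole]
    rw [this]
  -- counts of multiples
  have hdvdcard : ∀ d : ℕ, (R.filter (fun n => d ∣ n)).card = N / d := by
    intro d
    have e : R = Ioc 0 N := by rw [hR]; exact Finset.Icc_add_one_left_eq_Ioc 0 N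
    rw [e, Nat.Ioc_filter_dvd_card_eq_div]
  -- first moment
  have hS1 : ∑ n ∈ R, w n = ∑ p ∈ I, ((N / p : ℕ) : ℝ) := by
    rw [hw]
    rw [Finset.sum_comm]
    apply Finset.sum_congr rfl
    intro p _
    simp only [Finset.sum_boole]
    rw [hdvdcard p]
  have hIcard : I.card ≤ N := le_trans (Finset.card_filter_le _ _) (le_of_eq hcardR)
  have hS1low : (N : ℝ) * μ - N ≤ ∑ n ∈ R, w n := by
    rw [hS1]
    have : ∀ p ∈ I, (N : ℝ) * (p : ℝ)⁻¹ - 1 ≤ ((N / p : ℕ) : ℝ) := by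
      intro p hp
      have hppos : 0 < p := (Finset.mem_filter.1 hp).2.1.pos
      have hp0 : (0 : ℝ) < (p : ℝ) := by exact_mod_cast hppos
      have hmod : N % p < p := Nat.mod_lt _ hppos
      have hdm : p * (N / p) + N % p = N := Nat.div_add_mod N p
      have hkey : (N : ℝ) < (p : ℝ) * ((N / p : ℕ) : ℝ) + p := by
        have e : (N : ℝ) = (p : ℝ) * ((N / p : ℕ) : ℝ) + ((N % p : ℕ) : ℝ) := by
          exact_mod_cast hdm.symm
        rw [e]
        have : ((N % p : ℕ) : ℝ) < (p : ℝ) := by exact_mod_cast hmod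
        linarith
      have h2 : (N : ℝ) / p < ((N / p : ℕ) : ℝ) + 1 := by
        rw [div_lt_iff₀ hp0]
        nlinarith
      rw [← div_eq_mul_inv]
      linarith
    calc (N : ℝ) * μ - N = ∑ p ∈ I, ((N : ℝ) * (p : ℝ)⁻¹) - N := by rw [hμ, Finset.mul_sum]
    _ ≤ ∑ p ∈ I, ((N : ℝ) * (p : ℝ)⁻¹) - I.card := by
        have : (I.card : ℝ) ≤ (N : ℝ) := by exact_mod_cast hIcard
        linarith
    _ = ∑ p ∈ I, ((N : ℝ) * (p : ℝ)⁻¹ - 1) := by rw [Finset.sum_sub_distrib, Finset.sum_const]; simp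
    _ ≤ ∑ p ∈ I, ((N / p : ℕ) : ℝ) := Finset.sum_le_sum this
  -- second moment
  have hS2 : ∑ n ∈ R, (w n) ^ 2 ≤ (N : ℝ) * μ ^ 2 + N * μ := by
    have expand : ∑ n ∈ R, (w n) ^ 2 = ∑ p ∈ I, ∑ q ∈ I, ∑ n ∈ R,
        ((if p ∣ n then (1 : ℝ) else 0) * (if q ∣ n then (1 : ℝ) else 0)) := by
      have e1 : ∀ n, (w n) ^ 2 = ∑ p ∈ I, ∑ q ∈ I,
          ((if p ∣ n then (1 : ℝ) else 0) * (if q ∣ n then (1 : ℝ) else 0)) := by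
        intro n
        rw [sq, hw, Finset.sum_mul_sum]
      rw [Finset.sum_congr rfl (fun n _ => e1 n), Finset.sum_comm]
      exact Finset.sum_congr rfl (fun p _ => Finset.sum_comm)
    rw [expand]
    have hterm : ∀ p ∈ I, ∀ q ∈ I, ∑ n ∈ R,
        ((if p ∣ n then (1 : ℝ) else 0) * (if q ∣ n then (1 : ℝ) else 0))
        ≤ (N : ℝ) * (p : ℝ)⁻¹ * (q : ℝ)⁻¹ + (if p = q then (N : ℝ) * (p : ℝ)⁻¹ else 0) := by
      intro p hp q hq
      have hpprime : p.Prime := (Finset.mem_filter.1 hp).2.1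
      have hqprime : q.Prime := (Finset.mem_filter.1 hq).2.1
      have hp0 : (0 : ℝ) < (p : ℝ) := by exact_mod_cast hpprime.pos
      have hq0 : (0 : ℝ) < (q : ℝ) := by exact_mod_cast hqprime.pos
      have emul : ∀ n : ℕ, ((if p ∣ n then (1 : ℝ) else 0) * (if q ∣ n then (1 : ℝ) else 0))
          = (if p ∣ n ∧ q ∣ n then (1 : ℝ) else 0) := by
        intro n
        by_cases h1 : p ∣ n <;> by_cases h2 : q ∣ n <;> simp [h1, h2]
      rw [Finset.sum_congr rfl (fun n _ => emul n)]
      simp only [Finset.sum_boole]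
      by_cases hpq : p = q
      · subst hpq
        have e : R.filter (fun n => p ∣ n ∧ p ∣ n) = R.filter (fun n => p ∣ n) := by
          apply Finset.filter_congr; intro n _; simp
        rw [e, hdvdcard p, if_pos rfl]
        have h1 : ((N / p : ℕ) : ℝ) ≤ (N : ℝ) / (p : ℝ) := by
          calc ((N / p : ℕ) : ℝ) ≤ (N : ℝ) / ((p : ℕ) : ℝ) := Nat.cast_div_le
          _ = (N : ℝ) / (p : ℝ) := rfl
        have h2 : (0 : ℝ) ≤ (N : ℝ) * (p : ℝ)⁻¹ * (p : ℝ)⁻¹ := by positivity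
        rw [div_eq_mul_inv] at h1
        linarith
      · have hco : Nat.Coprime p q := (Nat.coprime_primes hpprime hqprime).2 hpq
        have e : R.filter (fun n => p ∣ n ∧ q ∣ n) = R.filter (fun n => p * q ∣ n) := by
          apply Finset.filter_congr
          intro n _
          constructor
          · rintro ⟨h1, h2⟩; exact Nat.Coprime.mul_dvd_of_dvd_of_dvd hco h1 h2
          · intro h; exact ⟨(dvd_mul_right p q).trans h, (dvd_mul_left q p).trans h⟩
        rw [e, hdvdcard (p * q), if_neg hpq]
        have h1 : ((N / (p * q) : ℕ) : ℝ) ≤ (N : ℝ) / ((p * q : ℕ) : ℝ) := Nat.cast_div_le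
        have h2 : (N : ℝ) / ((p * q : ℕ) : ℝ) = (N : ℝ) * (p : ℝ)⁻¹ * (q : ℝ)⁻¹ := by
          push_cast
          field_simp
        linarith [h1, h2.le]
    calc ∑ p ∈ I, ∑ q ∈ I, ∑ n ∈ R,
        ((if p ∣ n then (1 : ℝ) else 0) * (if q ∣ n then (1 : ℝ) else 0))
        ≤ ∑ p ∈ I, ∑ q ∈ I,
          ((N : ℝ) * (p : ℝ)⁻¹ * (q : ℝ)⁻¹ + (if p = q then (N : ℝ) * (p : ℝ)⁻¹ else 0)) := by
          apply Finset.sum_le_sum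
          intro p hp
          apply Finset.sum_le_sum
          intro q hq
          exact hterm p hp q hq
      _ = (N : ℝ) * μ ^ 2 + N * μ := by
          rw [Finset.sum_congr rfl (fun p _ => Finset.sum_add_distrib)]
          rw [Finset.sum_add_distrib]
          congr 1
          · rw [hμ, sq]
            rw [Finset.sum_congr rfl (fun p (_ : p ∈ I) => by
              rw [← Finset.mul_sum] : ∀ p ∈ I, _ = (N : ℝ) * (p:ℝ)⁻¹ * ∑ q ∈ I, (q:ℝ)⁻¹)]
            rw [← Finset.sum_mul, ← Finset.mul_sum]
            ring
          · rw [Finset.sum_congr rfl (fun p hp => Finset.sum_ite_eq I p (fun _ => (N : ℝ) * (p : ℝ)⁻¹))]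
            rw [Finset.sum_congr rfl (fun p (hp : p ∈ I) => if_pos hp)]
            rw [← Finset.mul_sum]
  -- Chebyshev
  have hchain : ((R.filter (fun n =>
      ((n.primeFactors.filter (fun p : ℕ => y < (p : ℝ))).card) < J)).card : ℝ) * (μ - J) ^ 2
      ≤ ∑ n ∈ R, (μ - w n) ^ 2 := by
    set B2 := R.filter (fun n =>
      ((n.primeFactors.filter (fun p : ℕ => y < (p : ℝ))).card) < J) with hB2
    have hstep : ∀ n ∈ B2, (μ - J) ^ 2 ≤ (μ - w n) ^ 2 := by
      intro n hn
      rcases Finset.mem_filter.1 hn with ⟨hnR, hnJ⟩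
      have hwn : w n = ((n.primeFactors.filter (fun p : ℕ => y < (p : ℝ))).card : ℝ) :=
        hwcard n hnR
      have hcJ : w n ≤ (J : ℝ) - 1 := by
        rw [hwn]
        have : (n.primeFactors.filter (fun p : ℕ => y < (p : ℝ))).card + 1 ≤ J := hnJ
        have := (Nat.cast_le (α := ℝ)).2 this
        push_cast at this
        linarith
      apply pow_le_pow_left₀ (by linarith)
      linarith
    calc ((B2.card : ℕ) : ℝ) * (μ - J) ^ 2 ≤ ∑ n ∈ B2, (μ - w n) ^ 2 := by
          have := Finset.card_nsmul_le_sum B2 (fun n => (μ - w n) ^ 2) ((μ - J) ^ 2) hstep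
          rwa [nsmul_eq_mul] at this
      _ ≤ ∑ n ∈ R, (μ - w n) ^ 2 := by
          apply Finset.sum_le_sum_of_subset_of_nonneg (Finset.filter_subset _ _)
          intro n _ _
          positivity
  have hexp : ∑ n ∈ R, (μ - w n) ^ 2
      = (N : ℝ) * μ ^ 2 - 2 * μ * (∑ n ∈ R, w n) + ∑ n ∈ R, (w n) ^ 2 := by
    have e1 : ∀ n, (μ - w n) ^ 2 = μ ^ 2 - 2 * μ * w n + (w n) ^ 2 := by intro n; ring
    rw [Finset.sum_congr rfl (fun n _ => e1 n)]
    rw [Finset.sum_add_distrib, Finset.sum_sub_distrib, Finset.sum_const, hcardR,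
      ← Finset.mul_sum]
    push_cast
    ring
  calc (((Icc 1 N).filter (fun n =>
      ((n.primeFactors.filter (fun p : ℕ => y < (p : ℝ))).card) < J)).card : ℝ) * (μ - J) ^ 2
      ≤ ∑ n ∈ R, (μ - w n) ^ 2 := hchain
    _ = (N : ℝ) * μ ^ 2 - 2 * μ * (∑ n ∈ R, w n) + ∑ n ∈ R, (w n) ^ 2 := hexp
    _ ≤ 3 * N * μ := by
        nlinarith [mul_nonneg hμ0 (sub_nonneg.2 hS1low), hS2]


lemma pi_lower (k : ℕ) (hk : 1 ≤ k) :
    (2 : ℝ) ^ k / k - 2 ≤ (((Ioc 1 (2 ^ k)).filter Nat.Prime).card : ℝ) := by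
  classical
  set c : ℕ := ((Ioc 1 (2 ^ k)).filter Nat.Prime).card with hc
  have hn : 2 * 2 ^ (k - 1) = 2 ^ k := by
    rw [← pow_succ']
    congr 1
    omega
  set m : ℕ := 2 ^ (k - 1) with hm
  have h1 : 4 ^ m ≤ (2 * m + 1) * (2 * m).choose m :=
    Nat.four_pow_le_two_mul_add_one_mul_central_binom m
  have hcb : (2 * m).choose m ≤ (2 ^ k) ^ c := by
    have e : (2 * m).choose m = Nat.centralBinom m := rfl
    rw [e, ← Nat.prod_pow_factorization_centralBinom m, hn]
    set T : Finset ℕ := (Ioc 1 (2 ^ k)).filter Nat.Prime with hT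
    have hsub : T ⊆ Finset.range (2 ^ k + 1) := by
      intro p hp
      rcases Finset.mem_filter.1 hp with ⟨hp1, _⟩
      exact Finset.mem_range.2 (Nat.lt_succ_of_le (Finset.mem_Ioc.1 hp1).2)
    have heq : ∏ p ∈ Finset.range (2 ^ k + 1), p ^ (Nat.centralBinom m).factorization p
        = ∏ p ∈ T, p ^ (Nat.centralBinom m).factorization p := by
      symm
      apply Finset.prod_subset hsub
      intro p hpr hpT
      by_cases hpp : p.Prime
      · exfalso
        apply hpT
        exact Finset.mem_filter.2 ⟨Finset.mem_Ioc.2 ⟨hpp.one_lt,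
          Nat.lt_succ_iff.1 (Finset.mem_range.1 hpr)⟩, hpp⟩
      · rw [Nat.factorization_eq_zero_of_not_prime _ hpp, pow_zero]
    rw [heq]
    have hle : ∀ p ∈ T, p ^ (Nat.centralBinom m).factorization p ≤ 2 ^ k := by
      intro p hp
      have h2m : 0 < 2 * m := by positivity
      have := Nat.pow_factorization_choose_le (p := p) h2m (n := 2 * m) (k := m)
      calc p ^ (Nat.centralBinom m).factorization p ≤ 2 * m := by
            exact Nat.pow_factorization_choose_le h2m
      _ = 2 ^ k := hn
    calc ∏ p ∈ T, p ^ (Nat.centralBinom m).factorization p ≤ ∏ p ∈ T, 2 ^ k :=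
          Finset.prod_le_prod' hle
    _ = (2 ^ k) ^ c := by rw [Finset.prod_const, hc]
  -- put together in ℕ
  have h2 : 2 ^ (2 ^ k) ≤ 2 ^ (k + 1 + k * c) := by
    calc 2 ^ (2 ^ k) = 4 ^ m := by
          rw [show (4:ℕ) = 2^2 from rfl, ← pow_mul, hm]
          congr 1
          omega
    _ ≤ (2 * m + 1) * (2 ^ k) ^ c := le_trans h1 (Nat.mul_le_mul_left _ hcb)
    _ ≤ 2 ^ (k + 1) * 2 ^ (k * c) := by
        apply Nat.mul_le_mul
        · rw [hn]
          calc 2 ^ k + 1 ≤ 2 ^ k + 2 ^ k := by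
                have : 1 ≤ 2 ^ k := Nat.one_le_two_pow
                omega
          _ = 2 ^ (k + 1) := by ring
        · rw [← pow_mul]
    _ = 2 ^ (k + 1 + k * c) := by rw [← pow_add]
  have h3 : 2 ^ k ≤ k + 1 + k * c := by
    have := (Nat.pow_le_pow_iff_right (by norm_num : 1 < 2)).1 h2
    exact this
  -- cast to ℝ
  have h4 : (2 : ℝ) ^ k ≤ (k : ℝ) + 1 + k * c := by exact_mod_cast h3
  have hk0 : (0 : ℝ) < (k : ℝ) := by exact_mod_cast hk
  rw [sub_le_iff_le_add, div_le_iff₀ hk0]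
  have hk1 : (1 : ℝ) ≤ (k : ℝ) := by exact_mod_cast hk
  nlinarith [h4, hk1]

lemma harm (a b : ℕ) (ha : 1 ≤ a) (hab : a ≤ b) :
    Real.log b - Real.log a ≤ ∑ k ∈ Ico a b, ((k : ℝ))⁻¹ := by
  induction b with
  | zero => omega
  | succ b ih =>
    rcases Nat.lt_or_ge a (b + 1) with h | h
    · have hab' : a ≤ b := by omega
      have hb0 : (0 : ℝ) < (b : ℝ) := by
        have : 1 ≤ b := by omega
        exact_mod_cast this
      have hstep : Real.log (b + 1) - Real.log b ≤ ((b : ℝ))⁻¹ := by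
        rw [← Real.log_div (by positivity) (ne_of_gt hb0)]
        have := Real.log_le_sub_one_of_pos (show (0:ℝ) < ((b:ℝ)+1)/b by positivity)
        calc Real.log (((b:ℝ)+1)/b) ≤ ((b:ℝ)+1)/b - 1 := this
        _ = ((b:ℝ))⁻¹ := by field_simp; ring
      rw [Finset.sum_Ico_succ_top hab']
      have := ih hab'
      push_cast
      push_cast at this
      linarith
    · have : a = b + 1 := by omega
      subst this
      simp
lemma abel_sum (f : ℕ → ℝ) (a b : ℕ) (hab : a ≤ b) :
    ∑ k ∈ Ico a b, (f (k + 1) - f k) * ((2 : ℝ) ^ (k + 1))⁻¹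
      = f b * ((2 : ℝ) ^ b)⁻¹ - f a * ((2 : ℝ) ^ a)⁻¹
        + ∑ k ∈ Ico a b, f k * ((2 : ℝ) ^ (k + 1))⁻¹ := by
  induction b with
  | zero =>
    have : a = 0 := by omega
    subst this
    simp
  | succ b ih =>
    rcases Nat.lt_or_ge a (b + 1) with h | h
    · have hab' : a ≤ b := by omega
      rw [Finset.sum_Ico_succ_top hab', Finset.sum_Ico_succ_top hab', ih hab']
      have e : ((2:ℝ) ^ (b+1))⁻¹ = ((2:ℝ)^b)⁻¹ / 2 := by
        rw [pow_succ]
        field_simp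
      ring
    · have : a = b + 1 := by omega
      subst this
      simp

open scoped Classical in
lemma mu_lower (y : ℝ) (N a b : ℕ) (ha : 1 ≤ a) (hab : a ≤ b) (hy : y ≤ 2 ^ a)
    (hbN : 2 ^ b ≤ N) :
    1 / 2 * (Real.log b - Real.log a) - 3 ≤
      ∑ p ∈ (Icc 1 N).filter (fun p : ℕ => p.Prime ∧ y < (p : ℝ)), (p : ℝ)⁻¹ := by
  classical
  set g : ℕ → ℝ := fun M => if M.Prime then (M : ℝ)⁻¹ else 0 with hg
  set f : ℕ → ℝ := fun k => (((Ioc 1 (2 ^ k)).filter Nat.Prime).card : ℝ) with hf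
  have hgnonneg : ∀ M, 0 ≤ g M := by
    intro M
    rw [hg]
    by_cases h : M.Prime <;> simp [h] <;> positivity
  -- step 1 : the interval sum is a lower bound for μ
  have step1 : ∑ M ∈ Ioc (2 ^ a) (2 ^ b), g M ≤
      ∑ p ∈ (Icc 1 N).filter (fun p : ℕ => p.Prime ∧ y < (p : ℝ)), (p : ℝ)⁻¹ := by
    rw [hg, Finset.sum_ite, Finset.sum_const, smul_zero, add_zero]
    apply Finset.sum_le_sum_of_subset_of_nonneg
    · intro p hp
      rcases Finset.mem_filter.1 hp with ⟨hp1, hp2⟩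
      rcases Finset.mem_Ioc.1 hp1 with ⟨hpa, hpb⟩
      have h2a : (1:ℕ) ≤ 2 ^ a := Nat.one_le_two_pow
      refine Finset.mem_filter.2 ⟨Finset.mem_Icc.2 ⟨by omega, le_trans hpb hbN⟩, hp2, ?_⟩
      have : ((2:ℝ)) ^ a < (p : ℝ) := by
        have : ((2 ^ a : ℕ) : ℝ) < (p : ℝ) := by exact_mod_cast hpa
        push_cast at this
        exact this
      linarith
    · intro p _ _
      positivity
  -- step 2 : decompose into dyadic blocks
  have step2 : ∀ b', a ≤ b' → ∑ M ∈ Ioc (2 ^ a) (2 ^ b'), g M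
      = ∑ k ∈ Ico a b', ∑ M ∈ Ioc (2 ^ k) (2 ^ (k + 1)), g M := by
    intro b' hb'
    induction b' with
    | zero =>
      have : a = 0 := by omega
      subst this
      simp
    | succ b' ih =>
      rcases Nat.lt_or_ge a (b' + 1) with h | h
      · have hab' : a ≤ b' := by omega
        rw [Finset.sum_Ico_succ_top hab', ← ih hab']
        rw [← Finset.sum_Ioc_consecutive g
          (Nat.pow_le_pow_right (by norm_num) hab')
          (Nat.pow_le_pow_right (by norm_num) (Nat.le_succ b'))]
      · have : a = b' + 1 := by omega
        subst this
        simp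
  -- step 3 : per-block lower bound
  have step3 : ∀ k, (f (k + 1) - f k) * ((2 : ℝ) ^ (k + 1))⁻¹
      ≤ ∑ M ∈ Ioc (2 ^ k) (2 ^ (k + 1)), g M := by
    intro k
    have hunion : Ioc 1 (2 ^ (k + 1)) = Ioc 1 (2 ^ k) ∪ Ioc (2 ^ k) (2 ^ (k + 1)) := by
      rw [Finset.Ioc_union_Ioc_eq_Ioc]
      · exact Nat.one_le_two_pow
      · exact Nat.pow_le_pow_right (by norm_num) (Nat.le_succ k)
    have hdisj : Disjoint ((Ioc 1 (2 ^ k)).filter Nat.Prime)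
        ((Ioc (2 ^ k) (2 ^ (k + 1))).filter Nat.Prime) := by
      apply Finset.disjoint_filter_filter
      rw [Finset.disjoint_left]
      intro M hM1 hM2
      rcases Finset.mem_Ioc.1 hM1 with ⟨_, h1⟩
      rcases Finset.mem_Ioc.1 hM2 with ⟨h2, _⟩
      omega
    have hcardblk : f (k + 1) - f k
        = (((Ioc (2 ^ k) (2 ^ (k + 1))).filter Nat.Prime).card : ℝ) := by
      have hcnt : ((Ioc 1 (2 ^ (k+1))).filter Nat.Prime).card
          = ((Ioc 1 (2 ^ k)).filter Nat.Prime).card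
            + ((Ioc (2 ^ k) (2 ^ (k + 1))).filter Nat.Prime).card := by
        rw [hunion, Finset.filter_union, Finset.card_union_of_disjoint hdisj]
      have e1 : f (k+1) = (((Ioc 1 (2 ^ (k+1))).filter Nat.Prime).card : ℝ) := rfl
      have e2 : f k = (((Ioc 1 (2 ^ k)).filter Nat.Prime).card : ℝ) := rfl
      rw [e1, e2, hcnt]
      push_cast
      ring
    rw [hcardblk]
    have hsum : ∑ M ∈ Ioc (2 ^ k) (2 ^ (k + 1)), g M
        = ∑ p ∈ (Ioc (2 ^ k) (2 ^ (k + 1))).filter Nat.Prime, (p : ℝ)⁻¹ := by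
      rw [hg, Finset.sum_ite, Finset.sum_const, smul_zero, add_zero]
    rw [hsum]
    have hbound : ∀ p ∈ (Ioc (2 ^ k) (2 ^ (k + 1))).filter Nat.Prime,
        ((2 : ℝ) ^ (k + 1))⁻¹ ≤ (p : ℝ)⁻¹ := by
      intro p hp
      rcases Finset.mem_Ioc.1 (Finset.mem_filter.1 hp).1 with ⟨hp1, hp2⟩
      apply inv_anti₀
      · exact_mod_cast (Finset.mem_filter.1 hp).2.pos
      · have : ((p:ℕ):ℝ) ≤ ((2 ^ (k+1) : ℕ) : ℝ) := by exact_mod_cast hp2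
        push_cast at this
        exact this
    have := Finset.card_nsmul_le_sum _ _ _ hbound
    rw [nsmul_eq_mul] at this
    linarith [this]
  -- step 4 : Abel summation and final bounds
  have habel := abel_sum f a b hab
  have hfb : 0 ≤ f b * ((2:ℝ) ^ b)⁻¹ := by
    rw [hf]
    positivity
  have hfa : f a * ((2:ℝ) ^ a)⁻¹ ≤ 1 := by
    rw [hf]
    have h1 : ((Ioc 1 (2 ^ a)).filter Nat.Prime).card ≤ 2 ^ a := by
      calc ((Ioc 1 (2 ^ a)).filter Nat.Prime).card ≤ (Ioc 1 (2 ^ a)).card :=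
            Finset.card_filter_le _ _
      _ = 2 ^ a - 1 := by rw [Nat.card_Ioc]
      _ ≤ 2 ^ a := Nat.sub_le _ _
    have h2 : (((Ioc 1 (2 ^ a)).filter Nat.Prime).card : ℝ) ≤ (2:ℝ) ^ a := by
      exact_mod_cast h1
    have h3 : (0:ℝ) < (2:ℝ) ^ a := by positivity
    calc (((Ioc 1 (2 ^ a)).filter Nat.Prime).card : ℝ) * ((2:ℝ) ^ a)⁻¹
        ≤ (2:ℝ) ^ a * ((2:ℝ) ^ a)⁻¹ := by
          apply mul_le_mul_of_nonneg_right h2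
          positivity
    _ = 1 := by field_simp
  have hfk : ∀ k ∈ Ico a b, 1 / 2 * ((k:ℝ))⁻¹ - ((2:ℝ) ^ k)⁻¹ ≤ f k * ((2 : ℝ) ^ (k + 1))⁻¹ := by
    intro k hk
    rcases Finset.mem_Ico.1 hk with ⟨hk1, _⟩
    have hk1' : 1 ≤ k := le_trans ha hk1
    have hpl := pi_lower k hk1'
    have hk0 : (0:ℝ) < (k:ℝ) := by exact_mod_cast hk1'
    have h2k : (0:ℝ) < (2:ℝ) ^ (k+1) := by positivity
    have e : ((2:ℝ) ^ k / k - 2) * ((2 : ℝ) ^ (k + 1))⁻¹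
        = 1 / 2 * ((k:ℝ))⁻¹ - ((2:ℝ) ^ k)⁻¹ := by
      rw [pow_succ]
      field_simp
    rw [← e, hf]
    apply mul_le_mul_of_nonneg_right hpl
    positivity
  have hgeom : ∑ k ∈ Ico a b, ((2:ℝ) ^ k)⁻¹ ≤ 2 := by
    have hsub : Ico a b ⊆ range b := by
      intro k hk
      exact Finset.mem_range.2 (Finset.mem_Ico.1 hk).2
    calc ∑ k ∈ Ico a b, ((2:ℝ) ^ k)⁻¹ ≤ ∑ k ∈ range b, ((2:ℝ) ^ k)⁻¹ := by
          apply Finset.sum_le_sum_of_subset_of_nonneg hsub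
          intro k _ _
          positivity
    _ = ∑ k ∈ range b, ((2:ℝ)⁻¹) ^ k := by
          apply Finset.sum_congr rfl
          intro k _
          rw [inv_pow]
    _ ≤ 2 := by
          have := geom_sum_eq (show (2:ℝ)⁻¹ ≠ 1 by norm_num) b
          rw [this]
          have h1 : (0:ℝ) ≤ (2:ℝ)⁻¹ ^ b := by positivity
          have : ((2:ℝ)⁻¹ ^ b - 1) / ((2:ℝ)⁻¹ - 1) = 2 * (1 - (2:ℝ)⁻¹ ^ b) := by
            field_simp
            ring
          rw [this]
          linarith
  have hharm := harm a b ha hab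
  -- combine
  have main : 1 / 2 * (Real.log b - Real.log a) - 3
      ≤ ∑ k ∈ Ico a b, (f (k + 1) - f k) * ((2 : ℝ) ^ (k + 1))⁻¹ := by
    rw [habel]
    have h1 : 1 / 2 * (∑ k ∈ Ico a b, ((k:ℝ))⁻¹) - 2 ≤ ∑ k ∈ Ico a b, f k * ((2 : ℝ) ^ (k + 1))⁻¹ := by
      calc 1 / 2 * (∑ k ∈ Ico a b, ((k:ℝ))⁻¹) - 2
          ≤ ∑ k ∈ Ico a b, (1 / 2 * ((k:ℝ))⁻¹) - ∑ k ∈ Ico a b, ((2:ℝ) ^ k)⁻¹ := by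
            rw [← Finset.mul_sum]
            linarith [hgeom]
      _ = ∑ k ∈ Ico a b, (1 / 2 * ((k:ℝ))⁻¹ - ((2:ℝ) ^ k)⁻¹) := by
            rw [Finset.sum_sub_distrib]
      _ ≤ ∑ k ∈ Ico a b, f k * ((2 : ℝ) ^ (k + 1))⁻¹ := Finset.sum_le_sum hfk
    have h2 : 1 / 2 * (Real.log b - Real.log a) ≤ 1 / 2 * (∑ k ∈ Ico a b, ((k:ℝ))⁻¹) := by
      linarith [hharm]
    linarith
  calc 1 / 2 * (Real.log b - Real.log a) - 3
      ≤ ∑ k ∈ Ico a b, (f (k + 1) - f k) * ((2 : ℝ) ^ (k + 1))⁻¹ := main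
  _ ≤ ∑ k ∈ Ico a b, ∑ M ∈ Ioc (2 ^ k) (2 ^ (k + 1)), g M :=
      Finset.sum_le_sum (fun k _ => step3 k)
  _ = ∑ M ∈ Ioc (2 ^ a) (2 ^ b), g M := (step2 b hab).symm
  _ ≤ _ := step1

set_option maxHeartbeats 2000000 in
/-- With `J = ⌊log log log x⌋` and `y = exp((log x)^(ε/2))`, the number of
inconvenient `n ≤ x` is `o(x)` as `x → ∞`. -/
theorem stmt10 (ε : ℝ) (hε0 : 0 < ε) (hε1 : ε ≤ 1) :
    Tendsto (fun x : ℝ =>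
      (Nat.card {n : ℕ | 0 < n ∧ (n : ℝ) ≤ x ∧
          ¬ Convenient x (Real.exp ((Real.log x) ^ (ε / 2)))
              ⌊Real.log (Real.log (Real.log x))⌋₊ n} : ℝ) / x)
      atTop (nhds 0) := by
  classical
  have hε2 : 0 < ε / 2 := by linarith
  rw [Metric.tendsto_nhds]
  intro δ hδ
  have t1 : Tendsto Real.log atTop atTop := Real.tendsto_log_atTop
  have t2 : Tendsto (fun x : ℝ => Real.log (Real.log x)) atTop atTop := t1.comp t1
  have t3 : Tendsto (fun x : ℝ => (Real.log x) ^ (ε / 2)) atTop atTop :=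
    (tendsto_rpow_atTop hε2).comp t1
  have t4 : Tendsto (fun x : ℝ => Real.exp ((Real.log x) ^ (ε / 2))) atTop atTop :=
    Real.tendsto_exp_atTop.comp t3
  filter_upwards [t2.eventually_ge_atTop (max 10000 (96 / δ + 20)),
    t4.eventually_ge_atTop (max 2 (8 / δ)),
    t3.eventually_ge_atTop 1,
    t1.eventually_ge_atTop 2,
    eventually_ge_atTop (3 : ℝ)] with x hT hy hs hlx hx3
  set y : ℝ := Real.exp ((Real.log x) ^ (ε / 2)) with hydef
  set J : ℕ := ⌊Real.log (Real.log (Real.log x))⌋₊ with hJdef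
  set N : ℕ := ⌊x⌋₊ with hNdef
  set T : ℝ := Real.log (Real.log x) with hTdef
  have hx0 : (0 : ℝ) < x := by linarith
  have hTbig : (10000 : ℝ) ≤ T := le_trans (le_max_left _ _) hT
  have hTδ : 96 / δ + 20 ≤ T := le_trans (le_max_right _ _) hT
  have hy2 : (2 : ℝ) ≤ y := le_trans (le_max_left _ _) hy
  have hyδ : 8 / δ ≤ y := le_trans (le_max_right _ _) hy
  have hy0 : (0 : ℝ) < y := by linarith
  have hlogx : (2 : ℝ) ≤ Real.log x := hlx
  have hlogxpos : (0 : ℝ) < Real.log x := by linarith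
  have hlogy : Real.log y = (Real.log x) ^ (ε / 2) := Real.log_exp _
  have hlogy1 : (1 : ℝ) ≤ Real.log y := by rw [hlogy]; exact hs
  have hlog2pos : (0 : ℝ) < Real.log 2 := Real.log_pos (by norm_num)
  have hlog2half : (1 : ℝ) / 2 ≤ Real.log 2 := by
    have := Real.log_two_gt_d9
    linarith
  have hlog2one : Real.log 2 ≤ 1 := by
    have := Real.log_two_lt_d9
    linarith
  -- the bad set as a finset
  set badF : Finset ℕ := (Icc 1 N).filter (fun n => ¬ Convenient x y J n) with hbadF
  have hset : {n : ℕ | 0 < n ∧ (n : ℝ) ≤ x ∧ ¬ Convenient x y J n} = ↑badF := by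
    ext n
    simp only [Set.mem_setOf_eq, Finset.coe_filter, Finset.mem_Icc, hbadF]
    constructor
    · rintro ⟨h1, h2, h3⟩
      exact ⟨⟨h1, Nat.le_floor h2⟩, h3⟩
    · rintro ⟨⟨h1, h2⟩, h3⟩
      refine ⟨h1, ?_, h3⟩
      calc (n : ℝ) ≤ (N : ℝ) := by exact_mod_cast h2
      _ ≤ x := Nat.floor_le hx0.le
  have hcount : (Nat.card {n : ℕ | 0 < n ∧ (n : ℝ) ≤ x ∧ ¬ Convenient x y J n} : ℝ)
      = (badF.card : ℝ) := by
    rw [hset, Nat.card_coe_set_eq, Set.ncard_coe_finset]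
  -- split into B1 and B2
  set B1 : Finset ℕ := (Icc 1 N).filter (fun n => ∃ p : ℕ, p.Prime ∧ y < (p : ℝ) ∧ p ^ 2 ∣ n)
    with hB1
  set B2 : Finset ℕ := (Icc 1 N).filter
    (fun n => ((n.primeFactors.filter (fun p : ℕ => y < (p : ℝ))).card) < J) with hB2
  have hsplit : badF ⊆ B1 ∪ B2 := by
    intro n hn
    rcases Finset.mem_filter.1 hn with ⟨hnI, hnc⟩
    by_contra hcon
    rw [Finset.mem_union] at hcon
    push_neg at hcon
    rcases hcon with ⟨hc1, hc2⟩
    have h1 : ¬ ∃ p : ℕ, p.Prime ∧ y < (p : ℝ) ∧ p ^ 2 ∣ n := by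
      intro hex
      exact hc1 (Finset.mem_filter.2 ⟨hnI, hex⟩)
    have h2 : J ≤ (n.primeFactors.filter (fun p : ℕ => y < (p : ℝ))).card := by
      by_contra hlt
      exact hc2 (Finset.mem_filter.2 ⟨hnI, by omega⟩)
    rcases Finset.mem_Icc.1 hnI with ⟨hn1, hn2⟩
    have hnx : (n : ℝ) ≤ x := by
      calc (n : ℝ) ≤ (N : ℝ) := by exact_mod_cast hn2
      _ ≤ x := Nat.floor_le hx0.le
    exact hnc (incl (by omega) hnx h1 h2)
  -- μ and its lower bound
  set μ : ℝ := ∑ p ∈ (Icc 1 N).filter (fun p : ℕ => p.Prime ∧ y < (p : ℝ)), (p : ℝ)⁻¹ with hμ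
  set a : ℕ := ⌊Real.log y / Real.log 2⌋₊ + 1 with ha
  set b : ℕ := ⌊Real.log x / Real.log 2⌋₊ with hb
  have ha1 : 1 ≤ a := by omega
  have hya : y ≤ 2 ^ a := by
    have h1 : Real.log y / Real.log 2 < (a : ℕ) := by
      rw [ha]
      push_cast
      exact Nat.lt_floor_add_one _
    have h2 : Real.log y < a * Real.log 2 := by
      rw [div_lt_iff₀ hlog2pos] at h1
      linarith
    have h3 : (0 : ℝ) < (2 : ℝ) ^ a := by positivity
    calc y = Real.exp (Real.log y) := (Real.exp_log hy0).symm
    _ ≤ Real.exp (a * Real.log 2) := by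
        apply Real.exp_le_exp.2
        linarith
    _ = (2 : ℝ) ^ a := by
        rw [← Real.log_pow, Real.exp_log h3]
  have hya' : y ≤ ((2 ^ a : ℕ) : ℝ) := by push_cast; exact hya
  have hbN : 2 ^ b ≤ N := by
    apply Nat.le_floor
    have h1 : (b : ℝ) ≤ Real.log x / Real.log 2 := Nat.floor_le (by positivity)
    have h2 : (b : ℝ) * Real.log 2 ≤ Real.log x := (le_div_iff₀ hlog2pos).1 h1
    have h3 : ((2 : ℝ)) ^ b ≤ x := by
      have hp : (0 : ℝ) < (2 : ℝ) ^ b := by positivity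
      calc (2 : ℝ) ^ b = Real.exp ((b : ℝ) * Real.log 2) := by
            rw [← Real.log_pow, Real.exp_log hp]
      _ ≤ Real.exp (Real.log x) := Real.exp_le_exp.2 h2
      _ = x := Real.exp_log hx0
    push_cast
    exact h3
  -- log b is large
  have hblow : Real.log x / 2 ≤ (b : ℝ) := by
    have h1 : Real.log x / Real.log 2 - 1 < (b : ℝ) := Nat.sub_one_lt_floor _
    have h2 : Real.log x ≤ Real.log x / Real.log 2 := by
      rw [le_div_iff₀ hlog2pos]
      calc Real.log x * Real.log 2 ≤ Real.log x * 1 :=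
            mul_le_mul_of_nonneg_left hlog2one (by linarith only [hlogx])
      _ = Real.log x := by ring
    linarith only [h1, h2, hlogx]
  have hbpos : (0 : ℝ) < (b : ℝ) := lt_of_lt_of_le (by linarith) hblow
  have hbT : T - 1 ≤ Real.log b := by
    have h1 : Real.log (Real.log x / 2) ≤ Real.log b :=
      Real.log_le_log (by positivity) hblow
    rw [Real.log_div (ne_of_gt hlogxpos) (by norm_num)] at h1
    have : T = Real.log (Real.log x) := hTdef
    linarith [hlog2one]
  -- log a is small
  have hapos : (0 : ℝ) < (a : ℝ) := by
    have : (0 : ℕ) < a := by omega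
    exact_mod_cast this
  have haup : (a : ℝ) ≤ 3 * Real.log y := by
    have h1 : (⌊Real.log y / Real.log 2⌋₊ : ℝ) ≤ Real.log y / Real.log 2 :=
      Nat.floor_le (by positivity)
    have h2 : Real.log y / Real.log 2 ≤ 2 * Real.log y := by
      rw [div_le_iff₀ hlog2pos]
      have h2a : 2 * Real.log y * (1/2) ≤ 2 * Real.log y * Real.log 2 :=
        mul_le_mul_of_nonneg_left hlog2half (by linarith only [hlogy1])
      linarith only [h2a]
    have e : (a : ℝ) = (⌊Real.log y / Real.log 2⌋₊ : ℝ) + 1 := by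
      rw [ha]
      push_cast
      ring
    rw [e]
    linarith [hlogy1]
  have haT : Real.log a ≤ T / 2 + 2 := by
    have h1 : Real.log a ≤ Real.log (3 * Real.log y) := Real.log_le_log hapos haup
    rw [Real.log_mul (by norm_num) (by linarith)] at h1
    have h2 : Real.log (Real.log y) = (ε / 2) * T := by
      rw [hlogy, hTdef, Real.log_rpow hlogxpos]
    have h3 : Real.log 3 ≤ 2 := by
      have := Real.log_le_sub_one_of_pos (show (0:ℝ) < 3 by norm_num)
      linarith
    have hT0 : (0 : ℝ) ≤ T := by linarith only [hTbig]
    have h4 : (ε / 2) * T ≤ T / 2 := by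
      have := mul_le_mul_of_nonneg_right (show ε / 2 ≤ 1 / 2 by linarith only [hε1]) hT0
      linarith only [this]
    linarith only [h1, h2, h3, h4]
  have hab : a ≤ b := by
    have h1 : Real.log a < Real.log b := by linarith only [haT, hbT, hTbig]
    have h2 : (a : ℝ) < (b : ℝ) := (Real.log_lt_log_iff hapos hbpos).1 h1
    exact_mod_cast h2.le
  have hmu := mu_lower y N a b ha1 hab hya hbN
  rw [← hμ] at hmu
  have hmuT : T / 4 - 5 ≤ μ := by linarith only [hbT, haT, hmu]
  have hμpos : 0 < μ := by linarith only [hmuT, hTbig]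
  -- bound on J
  have hJlogT : (J : ℝ) ≤ Real.log T := by
    rw [hJdef, hTdef]
    apply Nat.floor_le
    apply Real.log_nonneg
    have : T = Real.log (Real.log x) := hTdef
    linarith
  have hlogT : Real.log T ≤ T / 8 - 3 := by
    set u := Real.sqrt T with hu
    have hu0 : 0 ≤ u := Real.sqrt_nonneg T
    have hu2 : u ^ 2 = T := Real.sq_sqrt (by linarith)
    have hu100 : 100 ≤ u := by
      by_contra hcon
      push_neg at hcon
      have : u * u < 100 * 100 := by
        apply mul_lt_mul'' hcon hcon hu0 hu0
      have hT' : T < 10000 := by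
        have : u ^ 2 < 10000 := by ring_nf; ring_nf at this; linarith only [this]
        linarith only [this, hu2]
      linarith only [hT', hTbig]
    have hloge : Real.log T = 2 * Real.log u := by
      rw [← hu2, Real.log_pow]
      push_cast
      ring
    have h2 : Real.log u ≤ u - 1 := Real.log_le_sub_one_of_pos (by linarith only [hu100])
    have h5 : 100 * u ≤ u * u := mul_le_mul_of_nonneg_right hu100 hu0
    have h6 : u ^ 2 = u * u := sq u
    linarith only [hloge, h2, h5, h6, hu2, hu100]
  have hJμ2 : (J : ℝ) ≤ μ / 2 := by linarith only [hJlogT, hlogT, hmuT, hTbig]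
  have hJμ : (J : ℝ) < μ := by linarith only [hJμ2, hμpos]
  -- counting bounds
  have hcB2 := countB2 y N J hJμ
  rw [← hμ, ← hB2] at hcB2
  have hB2card : (B2.card : ℝ) ≤ 12 * N / μ := by
    have hsq : (μ / 2) ^ 2 ≤ (μ - J) ^ 2 := by
      apply pow_le_pow_left₀ (by linarith) (by linarith)
    have h1 : (B2.card : ℝ) * (μ / 2) ^ 2 ≤ 3 * N * μ :=
      le_trans (mul_le_mul_of_nonneg_left hsq (Nat.cast_nonneg _)) hcB2
    rw [le_div_iff₀ hμpos]
    have h2 : ((B2.card : ℝ) * μ) * μ ≤ (12 * N) * μ := by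
      have e : (B2.card : ℝ) * (μ / 2) ^ 2 = ((B2.card : ℝ) * μ) * μ / 4 := by ring
      rw [e] at h1
      linarith only [h1]
    exact le_of_mul_le_mul_right h2 hμpos
  have hB1card : (B1.card : ℝ) ≤ 2 * N / y := by
    have := countB1 y hy2 N
    rw [← hB1] at this
    exact this
  have hNx : (N : ℝ) ≤ x := Nat.floor_le hx0.le
  have hbad : (badF.card : ℝ) ≤ 2 * N / y + 12 * N / μ := by
    calc (badF.card : ℝ) ≤ ((B1 ∪ B2).card : ℝ) := by
          exact_mod_cast Finset.card_le_card hsplit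
    _ ≤ (B1.card : ℝ) + (B2.card : ℝ) := by exact_mod_cast Finset.card_union_le B1 B2
    _ ≤ _ := by linarith
  -- final numerics
  have hyδ' : 2 / y ≤ δ / 4 := by
    rw [div_le_div_iff₀ hy0 (by norm_num : (0:ℝ) < 4)]
    have h1 : 8 / δ * δ ≤ y * δ := mul_le_mul_of_nonneg_right hyδ (le_of_lt hδ)
    rw [div_mul_cancel₀ _ (ne_of_gt hδ)] at h1
    linarith
  have hμδ : 12 / μ ≤ δ / 2 := by
    have hμ24 : 24 / δ ≤ μ := by
      have e : 96 / δ = 4 * (24 / δ) := by ring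
      linarith only [hTδ, hmuT, e]
    rw [div_le_div_iff₀ hμpos (by norm_num : (0:ℝ) < 2)]
    have h1 : 24 / δ * δ ≤ μ * δ := mul_le_mul_of_nonneg_right hμ24 (le_of_lt hδ)
    rw [div_mul_cancel₀ _ (ne_of_gt hδ)] at h1
    linarith
  have hNx1 : (N : ℝ) / x ≤ 1 := (div_le_one hx0).2 hNx
  have hfrac : (badF.card : ℝ) / x ≤ 2 / y + 12 / μ := by
    have h1 : (badF.card : ℝ) / x ≤ (2 * N / y + 12 * N / μ) / x :=
      (div_le_div_iff_of_pos_right hx0).2 hbad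
    have e1 : (2 * (N:ℝ) / y + 12 * N / μ) / x = 2 / y * ((N:ℝ) / x) + 12 / μ * ((N:ℝ) / x) := by
      field_simp
    have h2 : 2 / y * ((N:ℝ) / x) ≤ 2 / y := by
      have : 2 / y * ((N:ℝ) / x) ≤ 2 / y * 1 :=
        mul_le_mul_of_nonneg_left hNx1 (by positivity)
      linarith
    have h3 : 12 / μ * ((N:ℝ) / x) ≤ 12 / μ := by
      have : 12 / μ * ((N:ℝ) / x) ≤ 12 / μ * 1 :=
        mul_le_mul_of_nonneg_left hNx1 (by positivity)
      linarith
    rw [e1] at h1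
    linarith
  rw [Real.dist_eq, sub_zero, hcount]
  have hnonneg : 0 ≤ (badF.card : ℝ) / x := by positivity
  rw [abs_of_nonneg hnonneg]
  calc (badF.card : ℝ) / x ≤ 2 / y + 12 / μ := hfrac
  _ ≤ δ / 4 + δ / 2 := by linarith only [hyδ', hμδ]
  _ < δ := by linarith only [hδ]
end
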